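/- On the manifold with coordinates (x, u, u₁, w), u > 0, let Y₀ = ∂_x + u₁∂_u + f∂_{u₁} + (x/u²)∂_w with f = -x²/(4u³) - u - 1/(2u), let Y₁ be the vector field with components determined by generating functions φ¹ = u e^w, φ² = -2e^w (i.e. Y₁ = u e^w ∂_u + Ỹ₀(u e^w) ∂_{u₁} - 2e^w ∂_w where Ỹ₀ = Y₀), let Y₂ = ∂_w and Y₃ = ∂_x - (1/(2u))∂_{u₁}. Then [Y₁, Y₀] is proportional to Y₀, [Y₂, Y₀] ∈ span(Y₀, Y₁), [Y₂, Y₁] ∈ span(Y₀, Y₁), and [Y₃, Y_j] ∈ span(Y₀, Y₁, Y₂) for j = 0, 1, 2; i.e. {Y₁, Y₂, Y₃} is a solvable structure for span(Y₀). -/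

import Mathlib

/-- Lie bracket of vector fields on `ℝⁿ`. -/
noncomputable def vbracket {n : ℕ} (X Y : (Fin n → ℝ) → (Fin n → ℝ)) :
    (Fin n → ℝ) → (Fin n → ℝ) :=
  fun p => fderiv ℝ Y p (X p) - fderiv ℝ X p (Y p)

namespace Ex2Solv

/-- `Y₀ = ∂_x + u₁∂_u + f∂_{u₁} + (x/u²)∂_w` with `f = -x²/(4u³) - u - 1/(2u)`, on
coordinates `p = (x, u, u₁, w)`. -/
noncomputable def Y₀ (p : Fin 4 → ℝ) : Fin 4 → ℝ :=
  ![1, p 2, -(p 0) ^ 2 / (4 * (p 1) ^ 3) - p 1 - 1 / (2 * p 1), p 0 / (p 1) ^ 2]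

/-- The nonlocal symmetry `Y₁ = u e^w ∂_u + Y₀(u e^w) ∂_{u₁} - 2e^w ∂_w` with
generating functions `φ¹ = u e^w`, `φ² = -2e^w`. -/
noncomputable def Y₁ (p : Fin 4 → ℝ) : Fin 4 → ℝ :=
  ![0, p 1 * Real.exp (p 3),
    fderiv ℝ (fun q : Fin 4 → ℝ => q 1 * Real.exp (q 3)) p (Y₀ p),
    -2 * Real.exp (p 3)]

/-- `Y₂ = ∂_w`. -/
noncomputable def Y₂ (_ : Fin 4 → ℝ) : Fin 4 → ℝ := ![0, 0, 0, 1]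

/-- `Y₃ = ∂_x - (1/(2u))∂_{u₁}`. -/
noncomputable def Y₃ (p : Fin 4 → ℝ) : Fin 4 → ℝ := ![1, 0, -1 / (2 * p 1), 0]

end Ex2Solv

namespace Ex2SolvAux

open Ex2Solv

/-- The `i`-th coordinate projection as a continuous linear map. -/
noncomputable def prj (i : Fin 4) : (Fin 4 → ℝ) →L[ℝ] ℝ :=
  ContinuousLinearMap.proj i

lemma hcomp {p : Fin 4 → ℝ} (i : Fin 4) {h : ℝ → ℝ} {h' : ℝ}
    (hh : HasDerivAt h h' (p i)) :
    HasFDerivAt (fun q : Fin 4 → ℝ => h (q i)) (h' • prj i) p :=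
  hh.comp_hasFDerivAt p (hasFDerivAt_apply i p)

lemma Y1_two (q : Fin 4 → ℝ) :
    Y₁ q 2 = Real.exp (q 3) * q 2 + q 1 * Real.exp (q 3) * (q 0 / (q 1) ^ 2) := by
  have h : HasFDerivAt (fun r : Fin 4 → ℝ => r 1 * Real.exp (r 3))
      (q 1 • (Real.exp (q 3) • prj 3) + Real.exp (q 3) • prj 1) q :=
    (hasFDerivAt_apply 1 q).mul ((hasFDerivAt_apply 3 q).exp)
  have h2 : Y₁ q 2 = fderiv ℝ (fun r : Fin 4 → ℝ => r 1 * Real.exp (r 3)) q (Y₀ q) := by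
    simp [Y₁]
  rw [h2, h.fderiv]
  simp [prj, Y₀]
  ring

/-- Closed form for `Y₁`. -/
lemma Y1g : Y₁ = fun q : Fin 4 → ℝ =>
    ![0, q 1 * Real.exp (q 3),
      Real.exp (q 3) * q 2 + q 1 * Real.exp (q 3) * (q 0 / (q 1) ^ 2),
      -2 * Real.exp (q 3)] := by
  funext q i
  fin_cases i
  · simp [Y₁]
  · simp [Y₁]
  · simpa using Y1_two q
  · simp [Y₁]

/-- Derivative of `Y₀`. -/
lemma hY0 {p : Fin 4 → ℝ} (hu : p 1 ≠ 0) :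
    HasFDerivAt Y₀ (ContinuousLinearMap.pi
      ![0, prj 2,
        (-(p 0) / (2 * (p 1) ^ 3)) • prj 0
          + (3 * (p 0) ^ 2 / (4 * (p 1) ^ 4) - 1 + 1 / (2 * (p 1) ^ 2)) • prj 1,
        (1 / (p 1) ^ 2) • prj 0 + (-(2 * p 0) / (p 1) ^ 3) • prj 1]) p := by
  refine hasFDerivAt_pi'' fun i => ?_
  match i with
  | 0 =>
    simp only [ContinuousLinearMap.proj_pi, Y₀, Matrix.cons_val_zero]
    exact hasFDerivAt_const 1 p
  | 1 =>
    simp only [ContinuousLinearMap.proj_pi, Y₀, Matrix.cons_val_one, Matrix.head_cons]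
    exact hasFDerivAt_apply 2 p
  | 2 =>
    simp only [ContinuousLinearMap.proj_pi, Y₀, Matrix.cons_val_two, Matrix.tail_cons,
      Matrix.head_cons]
    have h := (((hcomp (p := p) 0 ((hasDerivAt_pow 2 (p 0)).neg)).mul
        (hcomp 1 (((hasDerivAt_pow 3 (p 1)).const_mul 4).inv (by positivity)))).sub
        (hasFDerivAt_apply 1 p)).sub
        (hcomp (p := p) 1 (((hasDerivAt_id (p 1)).const_mul 2).inv (by positivity)))
    have e : (fun q : Fin 4 → ℝ => -(q 0) ^ 2 / (4 * (q 1) ^ 3) - q 1 - 1 / (2 * q 1))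
        = fun q : Fin 4 → ℝ => -(q 0) ^ 2 * (4 * (q 1) ^ 3)⁻¹ - q 1 - (2 * q 1)⁻¹ := by
      funext q; rw [div_eq_mul_inv, one_div]
    rw [e]
    refine h.congr_fderiv ?_
    refine ContinuousLinearMap.ext fun v => ?_
    simp [prj]
    field_simp
    ring
  | 3 =>
    simp only [ContinuousLinearMap.proj_pi, Y₀, Matrix.cons_val_three, Matrix.tail_cons,
      Matrix.head_cons]
    have h := (hasFDerivAt_apply (𝕜 := ℝ) 0 p).mul
        (hcomp (p := p) 1 ((hasDerivAt_pow 2 (p 1)).inv (by positivity)))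
    have e : (fun q : Fin 4 → ℝ => q 0 / (q 1) ^ 2)
        = fun q : Fin 4 → ℝ => q 0 * ((q 1) ^ 2)⁻¹ := by
      funext q; rw [div_eq_mul_inv]
    rw [e]
    refine h.congr_fderiv ?_
    refine ContinuousLinearMap.ext fun v => ?_
    simp [prj]
    field_simp
    ring

/-- Derivative of `Y₁`. -/
lemma hY1 {p : Fin 4 → ℝ} (hu : p 1 ≠ 0) :
    HasFDerivAt Y₁ (ContinuousLinearMap.pi
      ![0,
        Real.exp (p 3) • prj 1 + (p 1 * Real.exp (p 3)) • prj 3,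
        (Real.exp (p 3) / p 1) • prj 0 + (-(p 0) * Real.exp (p 3) / (p 1) ^ 2) • prj 1
          + Real.exp (p 3) • prj 2
          + (Real.exp (p 3) * p 2 + p 0 * Real.exp (p 3) / p 1) • prj 3,
        (-2 * Real.exp (p 3)) • prj 3]) p := by
  rw [Y1g]
  refine hasFDerivAt_pi'' fun i => ?_
  match i with
  | 0 =>
    simp only [ContinuousLinearMap.proj_pi, Matrix.cons_val_zero]
    exact hasFDerivAt_const 0 p
  | 1 =>
    simp only [ContinuousLinearMap.proj_pi, Matrix.cons_val_one, Matrix.head_cons]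
    have h := (hasFDerivAt_apply (𝕜 := ℝ) 1 p).mul ((hasFDerivAt_apply 3 p).exp)
    refine h.congr_fderiv ?_
    refine ContinuousLinearMap.ext fun v => ?_
    simp [prj]
    ring
  | 2 =>
    simp only [ContinuousLinearMap.proj_pi, Matrix.cons_val_two, Matrix.tail_cons,
      Matrix.head_cons]
    have h := (((hasFDerivAt_apply (𝕜 := ℝ) 3 p).exp.mul (hasFDerivAt_apply 2 p)).add
        (((hasFDerivAt_apply (𝕜 := ℝ) 1 p).mul ((hasFDerivAt_apply 3 p).exp)).mul
          ((hasFDerivAt_apply (𝕜 := ℝ) 0 p).mul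
            (hcomp (p := p) 1 ((hasDerivAt_pow 2 (p 1)).inv (by positivity))))))
    have e : (fun q : Fin 4 → ℝ =>
          Real.exp (q 3) * q 2 + q 1 * Real.exp (q 3) * (q 0 / (q 1) ^ 2))
        = fun q : Fin 4 → ℝ =>
          Real.exp (q 3) * q 2 + q 1 * Real.exp (q 3) * (q 0 * ((q 1) ^ 2)⁻¹) := by
      funext q; rw [div_eq_mul_inv]
    rw [e]
    refine h.congr_fderiv ?_
    refine ContinuousLinearMap.ext fun v => ?_
    simp [prj]
    field_simp
    ring
  | 3 =>
    simp only [ContinuousLinearMap.proj_pi, Matrix.cons_val_three, Matrix.tail_cons,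
      Matrix.head_cons]
    have h := ((hasFDerivAt_apply (𝕜 := ℝ) 3 p).exp).const_mul (-2 : ℝ)
    refine h.congr_fderiv ?_
    refine ContinuousLinearMap.ext fun v => ?_
    simp [prj]
    ring

/-- Derivative of `Y₃`. -/
lemma hY3 {p : Fin 4 → ℝ} (hu : p 1 ≠ 0) :
    HasFDerivAt Y₃ (ContinuousLinearMap.pi
      ![0, 0, (1 / (2 * (p 1) ^ 2)) • prj 1, 0]) p := by
  refine hasFDerivAt_pi'' fun i => ?_
  match i with
  | 0 =>
    simp only [ContinuousLinearMap.proj_pi, Y₃, Matrix.cons_val_zero]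
    exact hasFDerivAt_const 1 p
  | 1 =>
    simp only [ContinuousLinearMap.proj_pi, Y₃, Matrix.cons_val_one, Matrix.head_cons]
    exact hasFDerivAt_const 0 p
  | 2 =>
    simp only [ContinuousLinearMap.proj_pi, Y₃, Matrix.cons_val_two, Matrix.tail_cons,
      Matrix.head_cons]
    have h := (hcomp (p := p) 1
        ((((hasDerivAt_id (p 1)).const_mul 2).inv (by positivity)).neg))
    have e : (fun q : Fin 4 → ℝ => -1 / (2 * q 1))
        = fun q : Fin 4 → ℝ => -(2 * q 1)⁻¹ := by
      funext q; rw [neg_div, one_div]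
    rw [e]
    refine h.congr_fderiv ?_
    refine ContinuousLinearMap.ext fun v => ?_
    simp [prj]
    field_simp
  | 3 =>
    simp only [ContinuousLinearMap.proj_pi, Y₃, Matrix.cons_val_three, Matrix.tail_cons,
      Matrix.head_cons]
    exact hasFDerivAt_const 0 p

lemma fdY2 (p : Fin 4 → ℝ) : fderiv ℝ Y₂ p = 0 :=
  fderiv_const_apply _

end Ex2SolvAux

set_option maxHeartbeats 2000000 in
open Ex2Solv Ex2SolvAux in
/-- On the region `u > 0` of the manifold with coordinates `(x, u, u₁, w)`:
`[Y₁, Y₀]` is proportional to `Y₀`, `[Y₂, Y₀]` and `[Y₂, Y₁]` lie in `span(Y₀, Y₁)`,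
and `[Y₃, Y_j] ∈ span(Y₀, Y₁, Y₂)` for `j = 0, 1, 2`; i.e. `{Y₁, Y₂, Y₃}` is a
solvable structure for `span(Y₀)`. -/
theorem stmt_10 (p : Fin 4 → ℝ) (hu : p 1 > 0) :
    vbracket Y₁ Y₀ p ∈ Submodule.span ℝ {Y₀ p} ∧
    vbracket Y₂ Y₀ p ∈ Submodule.span ℝ {Y₀ p, Y₁ p} ∧
    vbracket Y₂ Y₁ p ∈ Submodule.span ℝ {Y₀ p, Y₁ p} ∧
    vbracket Y₃ Y₀ p ∈ Submodule.span ℝ {Y₀ p, Y₁ p, Y₂ p} ∧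
    vbracket Y₃ Y₁ p ∈ Submodule.span ℝ {Y₀ p, Y₁ p, Y₂ p} ∧
    vbracket Y₃ Y₂ p ∈ Submodule.span ℝ {Y₀ p, Y₁ p, Y₂ p} := by
  have hu' : p 1 ≠ 0 := ne_of_gt hu
  have hE : Real.exp (p 3) ≠ 0 := Real.exp_ne_zero (p 3)
  have Y1p : Y₁ p = ![0, p 1 * Real.exp (p 3),
      Real.exp (p 3) * p 2 + p 1 * Real.exp (p 3) * (p 0 / (p 1) ^ 2),
      -2 * Real.exp (p 3)] := congrFun Y1g p
  have h0 := (hY0 hu').fderiv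
  have h1 := (hY1 hu').fderiv
  have h3 := (hY3 hu').fderiv
  have h2' := fdY2 p
  have h10 : vbracket Y₁ Y₀ p = 0 := by
    funext i
    simp only [vbracket, Pi.sub_apply, Pi.zero_apply]
    rw [h0, h1]
    fin_cases i <;>
      simp [prj, Y₀, Y1p] <;> (try field_simp) <;> ring
  have h20 : vbracket Y₂ Y₀ p = 0 := by
    funext i
    simp only [vbracket, Pi.sub_apply, Pi.zero_apply]
    rw [h0, h2']
    fin_cases i <;> simp [prj, Y₂]
  have h21 : vbracket Y₂ Y₁ p = Y₁ p := by
    funext i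
    simp only [vbracket, Pi.sub_apply]
    rw [h1, h2']
    fin_cases i <;>
      simp [prj, Y₂, Y1p] <;> (try field_simp) <;> (try ring)
  have h30 : vbracket Y₃ Y₀ p
      = (-(Real.exp (-(p 3))) / (2 * (p 1) ^ 2)) • Y₁ p := by
    funext i
    simp only [vbracket, Pi.sub_apply, Pi.smul_apply, smul_eq_mul]
    rw [h0, h3]
    fin_cases i <;>
      simp [prj, Y₀, Y₃, Y1p, Real.exp_neg] <;> (try field_simp) <;> (try ring)
  have h31 : vbracket Y₃ Y₁ p = 0 := by
    funext i
    simp only [vbracket, Pi.sub_apply, Pi.zero_apply]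
    rw [h1, h3]
    fin_cases i <;>
      simp [prj, Y₃, Y1p] <;> (try field_simp) <;> (try ring)
  have h32 : vbracket Y₃ Y₂ p = 0 := by
    funext i
    simp only [vbracket, Pi.sub_apply, Pi.zero_apply]
    rw [h3, h2']
    fin_cases i <;> simp [prj, Y₂]
  have m3 : Y₁ p ∈ Submodule.span ℝ {Y₀ p, Y₁ p} :=
    Submodule.subset_span (Set.mem_insert_of_mem _ rfl)
  have m4 : Y₁ p ∈ Submodule.span ℝ {Y₀ p, Y₁ p, Y₂ p} :=
    Submodule.subset_span (Set.mem_insert_of_mem _ (Set.mem_insert _ _))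
  exact ⟨h10 ▸ zero_mem _, h20 ▸ zero_mem _, h21 ▸ m3,
    h30 ▸ Submodule.smul_mem _ _ m4, h31 ▸ zero_mem _, h32 ▸ zero_mem _⟩
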